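/- Let z : ℕ → Matrix (Fin 2) (Fin 2) ℤ be any sequence each of whose values is L = [[1,0],[1,1]] or N = [[1,1],[0,1]], and for t ≥ 0 set M_t = L · (z 0 · z 1 · ⋯ · z (t−1)) · L⁻¹ (so M_0 = identity). Then for every t the Möbius map f_{M_t}(x) = (a x + b)/(c x + d), where M_t = [[a,b],[c,d]], has positive denominator c x + d on [0,1] and maps [0,1] into [0,1]; the images J_t = f_{M_t}([0,1]) form a decreasing nested sequence of nonempty closed subintervals of [0,1]; and the intersection ⋂_{t≥0} J_t is a singleton. -/
import Mathlib


/-- `L = [[1,0],[1,1]]`. -/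
def Lmat : Matrix (Fin 2) (Fin 2) ℤ := !![1, 0; 1, 1]

/-- `N = [[1,1],[0,1]]`. -/
def Nmat : Matrix (Fin 2) (Fin 2) ℤ := !![1, 1; 0, 1]

/-- `L⁻¹ = [[1,0],[-1,1]]`. -/
def Linv : Matrix (Fin 2) (Fin 2) ℤ := !![1, 0; -1, 1]

/-- The Möbius action of an integer matrix `[[a,b],[c,d]]` on `ℝ`: `x ↦ (ax+b)/(cx+d)`. -/
noncomputable def mobius (M : Matrix (Fin 2) (Fin 2) ℤ) (x : ℝ) : ℝ :=
  ((M 0 0 : ℝ) * x + (M 0 1 : ℝ)) / ((M 1 0 : ℝ) * x + (M 1 1 : ℝ))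

/-- `M_t = L ⬝ (z 0 ⬝ z 1 ⬝ ⋯ ⬝ z (t-1)) ⬝ L⁻¹`. -/
def conjWordProd (z : ℕ → Matrix (Fin 2) (Fin 2) ℤ) (t : ℕ) : Matrix (Fin 2) (Fin 2) ℤ :=
  Lmat * ((List.range t).map z).prod * Linv

lemma mulL (X : Matrix (Fin 2) (Fin 2) ℤ) :
    X * Lmat = !![X 0 0 + X 0 1, X 0 1; X 1 0 + X 1 1, X 1 1] := by
  ext i j; fin_cases i <;> fin_cases j <;>
    simp [Matrix.mul_apply, Fin.sum_univ_two, Lmat]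
lemma mulN (X : Matrix (Fin 2) (Fin 2) ℤ) :
    X * Nmat = !![X 0 0, X 0 0 + X 0 1; X 1 0, X 1 0 + X 1 1] := by
  ext i j; fin_cases i <;> fin_cases j <;>
    simp [Matrix.mul_apply, Fin.sum_univ_two, Nmat]
lemma conjE (X : Matrix (Fin 2) (Fin 2) ℤ) : Lmat * X * Linv =
    !![X 0 0 - X 0 1, X 0 1; X 0 0 + X 1 0 - X 0 1 - X 1 1, X 0 1 + X 1 1] := by
  ext i j; fin_cases i <;> fin_cases j <;>
    (simp [Matrix.mul_apply, Matrix.vecMul, dotProduct, Fin.sum_univ_two, Lmat, Linv] <;> ring)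
def Wz (z : ℕ → Matrix (Fin 2) (Fin 2) ℤ) (t : ℕ) : Matrix (Fin 2) (Fin 2) ℤ :=
  ((List.range t).map z).prod
lemma Wz_succ (z : ℕ → Matrix (Fin 2) (Fin 2) ℤ) (t : ℕ) :
    Wz z (t+1) = Wz z t * z t := by simp [Wz, List.range_succ]
lemma keyW (z : ℕ → Matrix (Fin 2) (Fin 2) ℤ) (hz : ∀ t, z t = Lmat ∨ z t = Nmat) (t : ℕ) :
    0 ≤ Wz z t 0 0 ∧ 0 ≤ Wz z t 0 1 ∧ 0 ≤ Wz z t 1 0 ∧ 0 ≤ Wz z t 1 1 ∧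
    Wz z t 0 0 * Wz z t 1 1 - Wz z t 0 1 * Wz z t 1 0 = 1 ∧
    1 ≤ Wz z t 0 0 + Wz z t 1 0 ∧ 1 ≤ Wz z t 0 1 + Wz z t 1 1 ∧
    (t : ℤ) + 2 ≤ Wz z t 0 0 + Wz z t 1 0 + Wz z t 0 1 + Wz z t 1 1 := by
  induction t with
  | zero => simp [Wz, Matrix.one_apply]
  | succ t ih =>
    obtain ⟨ha, hb, hc, hd, hdet, hac, hbd, hs⟩ := ih
    rcases hz t with h | h <;> rw [Wz_succ, h]
    · rw [mulL (Wz z t)]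
      push_cast
      simp only [Matrix.cons_val_zero, Matrix.cons_val_one, Matrix.head_cons,
        Matrix.cons_val_fin_one, Matrix.head_fin_const, Matrix.of_apply, Matrix.cons_val_one]
      refine ⟨by linarith, hb, by linarith, hd, by ring_nf; linarith [hdet], by linarith, hbd, by push_cast; linarith⟩
    · rw [mulN (Wz z t)]
      simp only [Matrix.cons_val_zero, Matrix.cons_val_one, Matrix.head_cons, Matrix.of_apply]
      refine ⟨ha, by linarith, hc, by linarith, by ring_nf; linarith [hdet], hac, by linarith, by push_cast; linarith⟩

open Set in
lemma den_ge {a b c d x : ℝ} (hac : 1 ≤ a + c) (hbd : 1 ≤ b + d)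
    (hx : x ∈ Icc (0:ℝ) 1) : 1 ≤ (a + c - b - d) * x + (b + d) := by
  obtain ⟨h0, h1⟩ := hx
  nlinarith [mul_nonneg h0 (sub_nonneg.2 hac), mul_nonneg (sub_nonneg.2 h1) (sub_nonneg.2 hbd)]

open Set in
lemma mobius_image (a b c d : ℝ) (hc : 0 ≤ c)
    (hdet : a * d - b * c = 1) (hac : 1 ≤ a + c) (hbd : 1 ≤ b + d) :
    (fun x => ((a - b) * x + b) / ((a + c - b - d) * x + (b + d))) '' Icc (0:ℝ) 1
      = Icc (b / (b + d)) (a / (a + c)) := by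
  have hacp : (0:ℝ) < a + c := by linarith
  have hbdp : (0:ℝ) < b + d := by linarith
  have hden : ∀ x ∈ Icc (0:ℝ) 1, (0:ℝ) < (a + c - b - d) * x + (b + d) := fun x hx =>
    lt_of_lt_of_le one_pos (den_ge hac hbd hx)
  set f := fun x : ℝ => ((a - b) * x + b) / ((a + c - b - d) * x + (b + d)) with hf
  have hf0 : f 0 = b / (b + d) := by simp [hf]
  have hf1 : f 1 = a / (a + c) := by
    have h1 : (1:ℝ) ∈ Icc (0:ℝ) 1 := by norm_num
    simp only [hf]
    rw [show (a - b) * 1 + b = a by ring, show (a + c - b - d) * 1 + (b + d) = a + c by ring]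
  have hcont : ContinuousOn f (Icc (0:ℝ) 1) := by
    apply ContinuousOn.div (by fun_prop) (by fun_prop)
    exact fun x hx => (hden x hx).ne'
  apply Set.Subset.antisymm
  · rintro _ ⟨x, hx, rfl⟩
    constructor
    · rw [div_le_div_iff₀ hbdp (hden x hx)]
      have key : ((a - b) * x + b) * (b + d) - b * ((a + c - b - d) * x + (b + d))
          = x * (a * d - b * c) := by ring
      rw [hdet] at key; linarith [hx.1]
    · rw [div_le_div_iff₀ (hden x hx) hacp]
      have key : a * ((a + c - b - d) * x + (b + d)) - ((a - b) * x + b) * (a + c)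
          = (1 - x) * (a * d - b * c) := by ring
      rw [hdet] at key; linarith [hx.2]
  · rw [← hf0, ← hf1]
    exact intermediate_value_Icc zero_le_one hcont

open Set in
lemma nest_ineq {a b c d : ℝ} (hdet : a * d - b * c = 1) (hac : 1 ≤ a + c) (hbd : 1 ≤ b + d) :
    b / (b + d) ≤ (a + b) / (a + b + (c + d)) ∧ (a + b) / (a + b + (c + d)) ≤ a / (a + c) := by
  have h1 : (0:ℝ) < b + d := by linarith
  have h2 : (0:ℝ) < a + c := by linarith
  have h3 : (0:ℝ) < a + b + (c + d) := by linarith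
  constructor
  · rw [div_le_div_iff₀ h1 h3]
    have k : (a + b) * (b + d) - b * (a + b + (c + d)) = a * d - b * c := by ring
    linarith
  · rw [div_le_div_iff₀ h3 h2]
    have k : a * (a + b + (c + d)) - (a + b) * (a + c) = a * d - b * c := by ring
    linarith

/-- For any sequence `z` of matrices each equal to `L` or `N`, the Möbius maps of
`M_t = L (z 0 ⋯ z (t-1)) L⁻¹` have positive denominator on `[0,1]`, map `[0,1]` into
`[0,1]`; the images `J_t = f_{M_t}([0,1])` form a decreasing nested sequence of nonempty
closed subintervals of `[0,1]`; and `⋂ t, J_t` is a singleton. -/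
theorem nested_unimodular_intervals
    (z : ℕ → Matrix (Fin 2) (Fin 2) ℤ) (hz : ∀ t, z t = Lmat ∨ z t = Nmat) :
    (∀ t : ℕ, ∀ x ∈ Set.Icc (0 : ℝ) 1,
        0 < ((conjWordProd z t) 1 0 : ℝ) * x + ((conjWordProd z t) 1 1 : ℝ) ∧
        mobius (conjWordProd z t) x ∈ Set.Icc (0 : ℝ) 1) ∧
    (∀ t : ℕ, mobius (conjWordProd z (t + 1)) '' Set.Icc (0 : ℝ) 1 ⊆
        mobius (conjWordProd z t) '' Set.Icc (0 : ℝ) 1) ∧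
    (∀ t : ℕ, ∃ u v : ℝ, u ≤ v ∧ 0 ≤ u ∧ v ≤ 1 ∧
        mobius (conjWordProd z t) '' Set.Icc (0 : ℝ) 1 = Set.Icc u v) ∧
    (∃ x : ℝ, (⋂ t : ℕ, mobius (conjWordProd z t) '' Set.Icc (0 : ℝ) 1) = {x}) := by
  have hconj : ∀ t, conjWordProd z t = Lmat * Wz z t * Linv := fun t => rfl
  -- cast key facts to ℝ
  have hkey : ∀ t, (0:ℝ) ≤ (Wz z t 0 0 : ℝ) ∧ (0:ℝ) ≤ (Wz z t 0 1 : ℝ) ∧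
      (0:ℝ) ≤ (Wz z t 1 0 : ℝ) ∧ (0:ℝ) ≤ (Wz z t 1 1 : ℝ) ∧
      (Wz z t 0 0 : ℝ) * (Wz z t 1 1 : ℝ) - (Wz z t 0 1 : ℝ) * (Wz z t 1 0 : ℝ) = 1 ∧
      1 ≤ (Wz z t 0 0 : ℝ) + (Wz z t 1 0 : ℝ) ∧ 1 ≤ (Wz z t 0 1 : ℝ) + (Wz z t 1 1 : ℝ) ∧
      (t : ℝ) + 2 ≤ (Wz z t 0 0 : ℝ) + (Wz z t 1 0 : ℝ) + (Wz z t 0 1 : ℝ) + (Wz z t 1 1 : ℝ) := by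
    intro t
    obtain ⟨h1, h2, h3, h4, h5, h6, h7, h8⟩ := keyW z hz t
    exact ⟨by exact_mod_cast h1, by exact_mod_cast h2, by exact_mod_cast h3,
      by exact_mod_cast h4, by exact_mod_cast h5, by exact_mod_cast h6,
      by exact_mod_cast h7, by exact_mod_cast h8⟩
  obtain ⟨U, hU⟩ : ∃ U : ℕ → ℝ, ∀ t,
      U t = (Wz z t 0 1 : ℝ) / ((Wz z t 0 1 : ℝ) + (Wz z t 1 1 : ℝ)) := ⟨_, fun t => rfl⟩
  obtain ⟨V, hV⟩ : ∃ V : ℕ → ℝ, ∀ t,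
      V t = (Wz z t 0 0 : ℝ) / ((Wz z t 0 0 : ℝ) + (Wz z t 1 0 : ℝ)) := ⟨_, fun t => rfl⟩
  -- image description
  have himg : ∀ t, mobius (conjWordProd z t) '' Set.Icc (0:ℝ) 1 = Set.Icc (U t) (V t) := by
    intro t
    obtain ⟨ha, hb, hc, hd, hdet, hac, hbd, _⟩ := hkey t
    have hfun : mobius (conjWordProd z t) = fun x =>
        (((Wz z t 0 0 : ℝ) - (Wz z t 0 1 : ℝ)) * x + (Wz z t 0 1 : ℝ)) /
        (((Wz z t 0 0 : ℝ) + (Wz z t 1 0 : ℝ) - (Wz z t 0 1 : ℝ) - (Wz z t 1 1 : ℝ)) * x +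
          ((Wz z t 0 1 : ℝ) + (Wz z t 1 1 : ℝ))) := by
      funext x
      rw [hconj t, conjE (Wz z t)]
      simp only [mobius, Matrix.cons_val_zero, Matrix.cons_val_one, Matrix.head_cons,
        Matrix.of_apply, Matrix.cons_val', Matrix.empty_val', Matrix.cons_val_fin_one,
        Matrix.head_fin_const]
      push_cast
      ring
    rw [hfun, hU t, hV t]
    exact mobius_image _ _ _ _ hc hdet hac hbd
  have hU0 : ∀ t, 0 ≤ U t := by
    intro t
    obtain ⟨ha, hb, hc, hd, hdet, hac, hbd, _⟩ := hkey t
    rw [hU t]; exact div_nonneg hb (by linarith)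
  have hV1 : ∀ t, V t ≤ 1 := by
    intro t
    obtain ⟨ha, hb, hc, hd, hdet, hac, hbd, _⟩ := hkey t
    rw [hV t]; exact div_le_one_of_le₀ (by linarith) (by linarith)
  have hUV : ∀ t, U t ≤ V t := by
    intro t
    obtain ⟨ha, hb, hc, hd, hdet, hac, hbd, _⟩ := hkey t
    rw [hU t, hV t, div_le_div_iff₀ (by linarith) (by linarith)]
    have k : (Wz z t 0 0 : ℝ) * ((Wz z t 0 1 : ℝ) + (Wz z t 1 1 : ℝ)) -
        (Wz z t 0 1 : ℝ) * ((Wz z t 0 0 : ℝ) + (Wz z t 1 0 : ℝ)) =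
        (Wz z t 0 0 : ℝ) * (Wz z t 1 1 : ℝ) - (Wz z t 0 1 : ℝ) * (Wz z t 1 0 : ℝ) := by ring
    linarith
  have hlen : ∀ t, V t - U t ≤ 1 / ((t : ℝ) + 1) := by
    intro t
    obtain ⟨ha, hb, hc, hd, hdet, hac, hbd, hs⟩ := hkey t
    have h1 : (0:ℝ) < (Wz z t 0 0 : ℝ) + (Wz z t 1 0 : ℝ) := by linarith
    have h2 : (0:ℝ) < (Wz z t 0 1 : ℝ) + (Wz z t 1 1 : ℝ) := by linarith
    have hq : V t - U t =
        ((Wz z t 0 0 : ℝ) * (Wz z t 1 1 : ℝ) - (Wz z t 0 1 : ℝ) * (Wz z t 1 0 : ℝ)) /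
        (((Wz z t 0 0 : ℝ) + (Wz z t 1 0 : ℝ)) * ((Wz z t 0 1 : ℝ) + (Wz z t 1 1 : ℝ))) := by
      rw [hU t, hV t]
      field_simp
      ring
    rw [hq, hdet]
    have hprod : (t : ℝ) + 1 ≤ ((Wz z t 0 0 : ℝ) + (Wz z t 1 0 : ℝ)) *
        ((Wz z t 0 1 : ℝ) + (Wz z t 1 1 : ℝ)) := by nlinarith
    exact one_div_le_one_div_of_le (by positivity) hprod
  -- monotonicity steps
  have hstep : ∀ t, U t ≤ U (t + 1) ∧ V (t + 1) ≤ V t := by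
    intro t
    obtain ⟨ha, hb, hc, hd, hdet, hac, hbd, _⟩ := hkey t
    rcases hz t with h | h
    · have e : Wz z (t + 1) = !![Wz z t 0 0 + Wz z t 0 1, Wz z t 0 1;
          Wz z t 1 0 + Wz z t 1 1, Wz z t 1 1] := by rw [Wz_succ, h, mulL]
      have e00 : Wz z (t+1) 0 0 = Wz z t 0 0 + Wz z t 0 1 := by rw [e]; simp
      have e01 : Wz z (t+1) 0 1 = Wz z t 0 1 := by rw [e]; simp
      have e10 : Wz z (t+1) 1 0 = Wz z t 1 0 + Wz z t 1 1 := by rw [e]; simp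
      have e11 : Wz z (t+1) 1 1 = Wz z t 1 1 := by rw [e]; simp
      constructor
      · rw [hU t, hU (t+1), e01, e11]
      · rw [hV t, hV (t+1), e00, e10]
        push_cast
        exact (nest_ineq hdet hac hbd).2
    · have e : Wz z (t + 1) = !![Wz z t 0 0, Wz z t 0 0 + Wz z t 0 1;
          Wz z t 1 0, Wz z t 1 0 + Wz z t 1 1] := by rw [Wz_succ, h, mulN]
      have e00 : Wz z (t+1) 0 0 = Wz z t 0 0 := by rw [e]; simp
      have e01 : Wz z (t+1) 0 1 = Wz z t 0 0 + Wz z t 0 1 := by rw [e]; simp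
      have e10 : Wz z (t+1) 1 0 = Wz z t 1 0 := by rw [e]; simp
      have e11 : Wz z (t+1) 1 1 = Wz z t 1 0 + Wz z t 1 1 := by rw [e]; simp
      constructor
      · rw [hU t, hU (t+1), e01, e11]
        push_cast
        have := (nest_ineq hdet hac hbd).1
        convert this using 2 <;> ring
      · rw [hV t, hV (t+1), e00, e10]
  have hmonoU : Monotone U := monotone_nat_of_le_succ fun t => (hstep t).1
  have hantiV : Antitone V := antitone_nat_of_succ_le fun t => (hstep t).2
  have hUV' : ∀ s t, U s ≤ V t := by
    intro s t
    calc U s ≤ U (max s t) := hmonoU (le_max_left s t)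
      _ ≤ V (max s t) := hUV _
      _ ≤ V t := hantiV (le_max_right s t)
  refine ⟨?_, ?_, ?_, ?_⟩
  · -- denominator positivity and image in [0,1]
    intro t x hx
    obtain ⟨ha, hb, hc, hd, hdet, hac, hbd, _⟩ := hkey t
    constructor
    · rw [hconj t, conjE (Wz z t)]
      simp only [Matrix.cons_val_zero, Matrix.cons_val_one, Matrix.head_cons,
        Matrix.of_apply, Matrix.cons_val', Matrix.empty_val', Matrix.cons_val_fin_one,
        Matrix.head_fin_const]
      push_cast
      have := den_ge hac hbd hx
      linarith
    · have hm : mobius (conjWordProd z t) x ∈ mobius (conjWordProd z t) '' Set.Icc (0:ℝ) 1 :=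
        Set.mem_image_of_mem _ hx
      rw [himg t] at hm
      exact ⟨le_trans (hU0 t) hm.1, le_trans hm.2 (hV1 t)⟩
  · intro t
    rw [himg t, himg (t+1)]
    exact Set.Icc_subset_Icc (hstep t).1 (hstep t).2
  · intro t
    exact ⟨U t, V t, hUV t, hU0 t, hV1 t, himg t⟩
  · have hbdd : BddAbove (Set.range U) := ⟨V 0, by rintro _ ⟨t, rfl⟩; exact hUV' t 0⟩
    refine ⟨⨆ t, U t, ?_⟩
    ext y
    simp only [Set.mem_iInter, Set.mem_singleton_iff]
    constructor
    · intro hy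
      have h1 : ∀ t, U t ≤ y ∧ y ≤ V t := by
        intro t
        have := hy t
        rw [himg t] at this
        exact this
      have hyge : (⨆ t, U t) ≤ y := ciSup_le fun t => (h1 t).1
      have hyle : y ≤ ⨆ t, U t := by
        by_contra hcon
        push_neg at hcon
        obtain ⟨n, hn⟩ := exists_nat_one_div_lt (sub_pos.2 hcon)
        have h2 : y - (⨆ t, U t) ≤ V n - U n :=
          sub_le_sub (h1 n).2 (le_ciSup hbdd n)
        have := hlen n
        linarith
      linarith
    · rintro rfl t
      rw [himg t]
      exact ⟨le_ciSup hbdd t, ciSup_le fun s => hUV' s t⟩
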